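/- Let G = C3 be the triangle with vertices v1, v2, v3. Then hn(G) = 3 but ohn(G→C4) = 2; in particular {v_{1,2}, v3} is a hull set of G→C4. -/

import Mathlib

variable {V : Type*}

/-- A directed walk from `u` to `v` given as its list of vertices. -/
def DiwalkFrom (A : V → V → Prop) (u v : V) (l : List V) : Prop :=
  l.Chain' A ∧ l.head? = some u ∧ l.getLast? = some v

/-- A `(u,v)`-geodesic: a directed walk of minimum length (hence a shortest directed path). -/
def IsGeodesic (A : V → V → Prop) (u v : V) (l : List V) : Prop :=
  DiwalkFrom A u v l ∧ ∀ l', DiwalkFrom A u v l' → l.length ≤ l'.length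

/-- The interval `I(S)`: `S` together with all vertices on geodesics between members of `S`. -/
def geoInterval (A : V → V → Prop) (S : Set V) : Set V :=
  S ∪ {w | ∃ u ∈ S, ∃ v ∈ S, ∃ l, IsGeodesic A u v l ∧ w ∈ l}

def GeoConvex (A : V → V → Prop) (S : Set V) : Prop := geoInterval A S = S

/-- The geodesic convex hull of `S`. -/
def geoHull (A : V → V → Prop) (S : Set V) : Set V := ⋂₀ {T | S ⊆ T ∧ GeoConvex A T}

def IsHullSet (A : V → V → Prop) (S : Set V) : Prop := geoHull A S = Set.univ

def IsGeodeticSet (A : V → V → Prop) (S : Set V) : Prop := geoInterval A S = Set.univ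

noncomputable def hullNumber (A : V → V → Prop) : ℕ :=
  sInf {n | ∃ S : Set V, S.Finite ∧ S.ncard = n ∧ IsHullSet A S}

noncomputable def geodeticNumber (A : V → V → Prop) : ℕ :=
  sInf {n | ∃ S : Set V, S.Finite ∧ S.ncard = n ∧ IsGeodeticSet A S}

def IsSource (A : V → V → Prop) (v : V) : Prop := ∀ u, ¬ A u v
def IsSink (A : V → V → Prop) (v : V) : Prop := ∀ w, ¬ A v w
def IsTransitiveVtx (A : V → V → Prop) (v : V) : Prop :=
  (∃ u, A u v) ∧ (∃ w, A v w) ∧ ∀ u w, A u v → A v w → A u w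
def IsExtremeVtx (A : V → V → Prop) (v : V) : Prop :=
  IsSource A v ∨ IsSink A v ∨ IsTransitiveVtx A v

/-- An oriented graph: an asymmetric (hence irreflexive) arc relation. -/
def Oriented (A : V → V → Prop) : Prop := ∀ u v, A u v → ¬ A v u

/-- Directed distance, `⊤` if there is no directed walk. -/
noncomputable def ddist (A : V → V → Prop) (u v : V) : ℕ∞ :=
  sInf {n : ℕ∞ | ∃ l, DiwalkFrom A u v l ∧ (l.length : ℕ∞) = n + 1}


/-- Vertex set of `G→C4`: original vertices plus one vertex `v_{i,j}` per ordered adjacent pair. -/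
abbrev oC4V {V : Type*} (G : SimpleGraph V) := V ⊕ {p : V × V // G.Adj p.1 p.2}

/-- `G→C4`: each edge `v_i v_j` of `G` replaced by the directed 4-cycle
`(v_i, v_{i,j}, v_j, v_{j,i})`. -/
def oC4 {V : Type*} (G : SimpleGraph V) : oC4V G → oC4V G → Prop
  | Sum.inl i, Sum.inr p => i = p.1.1
  | Sum.inr p, Sum.inl j => j = p.1.2
  | _, _ => False

section Aux
variable {A : V → V → Prop}

lemma diwalk_single (u : V) : DiwalkFrom A u u [u] := ⟨by simp [List.Chain'], by simp, by simp⟩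

lemma diwalk_one_le {u v : V} {l : List V} (h : DiwalkFrom A u v l) : 1 ≤ l.length := by
  cases l with
  | nil => simp [DiwalkFrom] at h
  | cons a t => simp

lemma diwalk_len_one {u v : V} {l : List V} (h : DiwalkFrom A u v l) (hl : l.length = 1) :
    l = [u] ∧ u = v := by
  match l, hl with
  | [a], _ =>
    obtain ⟨_, h1, h2⟩ := h
    simp at h1 h2
    subst h1; subst h2; exact ⟨rfl, rfl⟩

lemma diwalk_two_le {u v : V} {l : List V} (hne : u ≠ v) (h : DiwalkFrom A u v l) :
    2 ≤ l.length := by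
  match l with
  | [] => simp [DiwalkFrom] at h
  | [a] =>
    obtain ⟨_, h1, h2⟩ := h
    simp at h1 h2
    exact absurd (h1.symm.trans h2) hne
  | a :: b :: t => simp

lemma diwalk_len_two {u v : V} {l : List V} (h : DiwalkFrom A u v l) (hl : l.length = 2) :
    l = [u, v] ∧ A u v := by
  match l, hl with
  | [a, b], _ =>
    obtain ⟨hc, h1, h2⟩ := h
    simp at h1 h2
    subst h1; subst h2
    exact ⟨rfl, by simpa [List.Chain'] using hc⟩

lemma geodesic_single (u : V) : IsGeodesic A u u [u] :=
  ⟨diwalk_single u, fun l' h' => by simpa using diwalk_one_le h'⟩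

lemma convex_step {T : Set V} (hT : GeoConvex A T) {u v w : V} {l : List V}
    (hu : u ∈ T) (hv : v ∈ T) (hg : IsGeodesic A u v l) (hw : w ∈ l) : w ∈ T := by
  have : w ∈ geoInterval A T := Or.inr ⟨u, hu, v, hv, l, hg, hw⟩
  rwa [hT] at this

lemma geoConvex_empty : GeoConvex A (∅ : Set V) := by
  simp [GeoConvex, geoInterval]

lemma geoConvex_singleton (x : V) : GeoConvex A ({x} : Set V) := by
  unfold GeoConvex geoInterval
  apply subset_antisymm
  · apply Set.union_subset subset_rfl
    rintro w ⟨u, hu, v, hv, l, ⟨hd, hmin⟩, hw⟩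
    simp only [Set.mem_singleton_iff] at hu hv ⊢
    obtain rfl : u = v := hu.trans hv.symm
    have h1 : l.length = 1 :=
      le_antisymm (by simpa using hmin [u] (diwalk_single u)) (diwalk_one_le hd)
    obtain ⟨rfl, -⟩ := diwalk_len_one hd h1
    simp only [List.mem_singleton] at hw
    exact hw.trans hu
  · exact Set.subset_union_left

lemma geoHull_subset_of_convex {S : Set V} (hS : GeoConvex A S) : geoHull A S ⊆ S :=
  Set.sInter_subset_of_mem ⟨subset_rfl, hS⟩

lemma isHullSet_univ : IsHullSet A (Set.univ : Set V) :=
  Set.eq_univ_of_forall fun x => Set.mem_sInter.mpr fun _ hT => hT.1 (Set.mem_univ x)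

lemma two_le_of_hull {W : Type*} (A : W → W → Prop) {S : Set W} (hF : S.Finite)
    (hH : IsHullSet A S) {a b : W} (hab : a ≠ b) : 2 ≤ S.ncard := by
  by_contra hlt
  push_neg at hlt
  interval_cases h : S.ncard
  · rw [Set.ncard_eq_zero hF] at h
    subst h
    have : a ∈ geoHull A (∅ : Set W) := hH ▸ Set.mem_univ a
    exact absurd (geoHull_subset_of_convex geoConvex_empty this) (Set.notMem_empty a)
  · obtain ⟨x, rfl⟩ := Set.ncard_eq_one.mp h
    have ha : a ∈ geoHull A ({x} : Set W) := hH ▸ Set.mem_univ a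
    have hb : b ∈ geoHull A ({x} : Set W) := hH ▸ Set.mem_univ b
    have ha' := geoHull_subset_of_convex (geoConvex_singleton x) ha
    have hb' := geoHull_subset_of_convex (geoConvex_singleton x) hb
    simp only [Set.mem_singleton_iff] at ha' hb'
    exact hab (ha'.trans hb'.symm)

end Aux

section OC4
variable {G : SimpleGraph V}

lemma oC4_isLeft {x y : oC4V G} (h : oC4 G x y) : x.isLeft = !y.isLeft := by
  cases x <;> cases y <;> simp [oC4] at h ⊢

lemma oC4_parity :
    ∀ (l : List (oC4V G)) (u v : oC4V G), DiwalkFrom (oC4 G) u v l →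
      ((u.isLeft = v.isLeft) ↔ l.length % 2 = 1) := by
  intro l
  induction l with
  | nil => intro u v h; simp [DiwalkFrom] at h
  | cons a t ih =>
    intro u v h
    obtain ⟨hc, h1, h2⟩ := h
    simp only [List.head?_cons, Option.some_inj] at h1
    subst h1
    cases t with
    | nil =>
      simp only [List.getLast?_singleton, Option.some_inj] at h2
      subst h2
      simp
    | cons b t' =>
      rw [List.Chain', List.isChain_cons_cons] at hc
      obtain ⟨hab, hc'⟩ := hc
      rw [List.getLast?_cons_cons] at h2
      have ihh := ih b v ⟨hc', by simp, h2⟩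
      have hl := oC4_isLeft hab
      rw [hl]
      simp only [List.length_cons] at ihh ⊢
      cases hb : b.isLeft <;> cases hv : v.isLeft <;>
        simp [hb, hv] at ihh ⊢ <;> omega

lemma geodesic_ll {i j : V} (hij : i ≠ j) (h : G.Adj i j) :
    IsGeodesic (oC4 G) (Sum.inl i) (Sum.inl j)
      [Sum.inl i, Sum.inr ⟨(i, j), h⟩, Sum.inl j] := by
  refine ⟨⟨?_, by simp, by simp⟩, ?_⟩
  · simp [List.Chain', List.isChain_cons_cons, oC4]
  · intro l' h'
    have h2 := diwalk_two_le (fun e => hij (Sum.inl.inj e)) h'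
    have hp := (oC4_parity l' _ _ h').mp (by simp)
    simp only [List.length_cons, List.length_nil]
    omega

lemma geodesic_rl {p : {q : V × V // G.Adj q.1 q.2}} {j : V}
    (hne : j ≠ p.1.2) (h : G.Adj p.1.2 j) :
    IsGeodesic (oC4 G) (Sum.inr p) (Sum.inl j)
      [Sum.inr p, Sum.inl p.1.2, Sum.inr ⟨(p.1.2, j), h⟩, Sum.inl j] := by
  refine ⟨⟨?_, by simp, by simp⟩, ?_⟩
  · simp [List.Chain', List.isChain_cons_cons, oC4]
  · intro l' h'
    have h2 := diwalk_two_le (by simp) h'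
    have hp : ¬ l'.length % 2 = 1 := fun hh => by
      have := (oC4_parity l' _ _ h').mpr hh
      simp at this
    have hne2 : l'.length ≠ 2 := fun e => hne (diwalk_len_two h' e).2
    simp only [List.length_cons, List.length_nil]
    omega

lemma geodesic_lr {p : {q : V × V // G.Adj q.1 q.2}} {i : V}
    (hne : i ≠ p.1.1) (h : G.Adj i p.1.1) :
    IsGeodesic (oC4 G) (Sum.inl i) (Sum.inr p)
      [Sum.inl i, Sum.inr ⟨(i, p.1.1), h⟩, Sum.inl p.1.1, Sum.inr p] := by
  refine ⟨⟨?_, by simp, by simp⟩, ?_⟩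
  · simp [List.Chain', List.isChain_cons_cons, oC4]
  · intro l' h'
    have h2 := diwalk_two_le (by simp) h'
    have hp : ¬ l'.length % 2 = 1 := fun hh => by
      have := (oC4_parity l' _ _ h').mpr hh
      simp at this
    have hne2 : l'.length ≠ 2 := fun e => hne (diwalk_len_two h' e).2
    simp only [List.length_cons, List.length_nil]
    omega

end OC4

lemma k3_convex (S : Set (Fin 3)) : GeoConvex (⊤ : SimpleGraph (Fin 3)).Adj S := by
  unfold GeoConvex geoInterval
  apply subset_antisymm
  · apply Set.union_subset subset_rfl
    rintro w ⟨u, hu, v, hv, l, ⟨hd, hmin⟩, hw⟩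
    by_cases huv : u = v
    · subst huv
      have h1 : l.length = 1 :=
        le_antisymm (by simpa using hmin [u] (diwalk_single u)) (diwalk_one_le hd)
      obtain ⟨rfl, -⟩ := diwalk_len_one hd h1
      simp only [List.mem_singleton] at hw
      exact hw ▸ hu
    · have hadj : (⊤ : SimpleGraph (Fin 3)).Adj u v := huv
      have hdw : DiwalkFrom (⊤ : SimpleGraph (Fin 3)).Adj u v [u, v] :=
        ⟨by simp [List.Chain', List.isChain_cons_cons, hadj], by simp, by simp⟩
      have h2 : l.length = 2 :=
        le_antisymm (by simpa using hmin [u, v] hdw) (diwalk_two_le huv hd)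
      obtain ⟨rfl, -⟩ := diwalk_len_two hd h2
      simp only [List.mem_cons, List.mem_singleton, List.not_mem_nil, or_false] at hw
      rcases hw with rfl | rfl
      · exact hu
      · exact hv
  · exact Set.subset_union_left

abbrev K3 : SimpleGraph (Fin 3) := ⊤

lemma main_hull (h01 : (⊤ : SimpleGraph (Fin 3)).Adj 0 1) :
    IsHullSet (oC4 (⊤ : SimpleGraph (Fin 3)))
      ({Sum.inr ⟨((0 : Fin 3), (1 : Fin 3)), h01⟩, Sum.inl 2} :
        Set (oC4V (⊤ : SimpleGraph (Fin 3)))) := by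
  apply Set.eq_univ_of_forall
  intro x
  rw [geoHull, Set.mem_sInter]
  rintro T ⟨hS, hT⟩
  have a12 : K3.Adj 1 2 := by decide
  have a20 : K3.Adj 2 0 := by decide
  have a10 : K3.Adj 1 0 := by decide
  have a21 : K3.Adj 2 1 := by decide
  have a02 : K3.Adj 0 2 := by decide
  have hs1 : (Sum.inr ⟨((0:Fin 3), (1:Fin 3)), h01⟩ : oC4V K3) ∈ T := hS (Set.mem_insert _ _)
  have hs2 : (Sum.inl 2 : oC4V K3) ∈ T := hS (Set.mem_insert_of_mem _ rfl)
  have g1 := geodesic_rl (p := ⟨((0:Fin 3), 1), h01⟩) (j := 2) (show (2:Fin 3) ≠ 1 by decide) a12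
  have hl1 : (Sum.inl 1 : oC4V K3) ∈ T := convex_step hT hs1 hs2 g1 (by simp)
  have hr12 : (Sum.inr ⟨((1:Fin 3), 2), a12⟩ : oC4V K3) ∈ T :=
    convex_step hT hs1 hs2 g1 (by simp)
  have g2 := geodesic_lr (p := ⟨((0:Fin 3), 1), h01⟩) (i := 2) (show (2:Fin 3) ≠ 0 by decide) a20
  have hr20 : (Sum.inr ⟨((2:Fin 3), 0), a20⟩ : oC4V K3) ∈ T :=
    convex_step hT hs2 hs1 g2 (by simp)
  have hl0 : (Sum.inl 0 : oC4V K3) ∈ T := convex_step hT hs2 hs1 g2 (by simp)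
  have g3 := geodesic_ll (by decide : (1:Fin 3) ≠ 0) a10
  have hr10 : (Sum.inr ⟨((1:Fin 3), 0), a10⟩ : oC4V K3) ∈ T :=
    convex_step hT hl1 hl0 g3 (by simp)
  have g4 := geodesic_ll (by decide : (2:Fin 3) ≠ 1) a21
  have hr21 : (Sum.inr ⟨((2:Fin 3), 1), a21⟩ : oC4V K3) ∈ T :=
    convex_step hT hs2 hl1 g4 (by simp)
  have g5 := geodesic_ll (by decide : (0:Fin 3) ≠ 2) a02
  have hr02 : (Sum.inr ⟨((0:Fin 3), 2), a02⟩ : oC4V K3) ∈ T :=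
    convex_step hT hl0 hs2 g5 (by simp)
  rcases x with i | ⟨⟨i, j⟩, hadj⟩
  · fin_cases i
    · exact hl0
    · exact hl1
    · exact hs2
  · fin_cases i <;> fin_cases j <;>
      first
        | exact absurd hadj (by decide)
        | exact hs1
        | exact hr12
        | exact hr20
        | exact hr10
        | exact hr21
        | exact hr02


/-- for the triangle `G = C3 = K3`, `hn(G) = 3` but `ohn(G→C4) = 2`;
in particular `{v_{1,2}, v_3}` is a hull set of `G→C4`. -/
theorem stmt_10 (h01 : (⊤ : SimpleGraph (Fin 3)).Adj 0 1) :
    hullNumber (⊤ : SimpleGraph (Fin 3)).Adj = 3 ∧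
    hullNumber (oC4 (⊤ : SimpleGraph (Fin 3))) = 2 ∧
    IsHullSet (oC4 (⊤ : SimpleGraph (Fin 3)))
      ({Sum.inr ⟨((0 : Fin 3), (1 : Fin 3)), h01⟩, Sum.inl 2} :
        Set (oC4V (⊤ : SimpleGraph (Fin 3)))) := by
  refine ⟨?_, ?_, main_hull h01⟩
  · have mem3 : 3 ∈ {n | ∃ S : Set (Fin 3), S.Finite ∧ S.ncard = n ∧
        IsHullSet (⊤ : SimpleGraph (Fin 3)).Adj S} :=
      ⟨Set.univ, Set.finite_univ, by simp [Set.ncard_univ], isHullSet_univ⟩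
    refine le_antisymm (Nat.sInf_le mem3) (le_csInf ⟨3, mem3⟩ ?_)
    rintro n ⟨S, hF, rfl, hH⟩
    have h1 : (Set.univ : Set (Fin 3)) ⊆ S :=
      hH ▸ geoHull_subset_of_convex (k3_convex S)
    have h2 : S = Set.univ := subset_antisymm (Set.subset_univ _) h1
    rw [h2, Set.ncard_univ]
    simp
  · have hne : (Sum.inr ⟨((0 : Fin 3), (1 : Fin 3)), h01⟩ : oC4V K3) ≠ Sum.inl 2 := by
      simp
    have mem2 : 2 ∈ {n | ∃ S : Set (oC4V K3), S.Finite ∧ S.ncard = n ∧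
        IsHullSet (oC4 K3) S} :=
      ⟨{Sum.inr ⟨((0 : Fin 3), (1 : Fin 3)), h01⟩, Sum.inl 2},
        (Set.finite_singleton _).insert _, Set.ncard_pair hne, main_hull h01⟩
    refine le_antisymm (Nat.sInf_le mem2) (le_csInf ⟨2, mem2⟩ ?_)
    rintro n ⟨S, hF, rfl, hH⟩
    exact two_le_of_hull _ hF hH
      (a := (Sum.inl 0 : oC4V K3)) (b := Sum.inl 1) (by simp)
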